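/- Let d ≥ 1 and let α₁, …, α_d be real numbers such that 1, α₁, …, α_d are linearly independent over ℚ. For each i let a^{(i)} be the Sturmian word a^{(i)}_n = ⌊nα_i⌋ − ⌊(n−1)α_i⌋, and let a be the product word a_n = (a^{(1)}_n, …, a^{(d)}_n). Then for every N ≥ 1 the subword complexity of a equals p_a(N) = (N+1)^d. -/

import Mathlib

open Finset Complex Filter


noncomputable def Complex.abs : AbsoluteValue ℂ ℝ := NormedField.toAbsoluteValue ℂ

lemma Complex.abs_apply (z : ℂ) : Complex.abs z = ‖z‖ := rfl

noncomputable def ee (x : ℝ) : ℂ := Complex.exp ((x : ℂ) * (2 * Real.pi * Complex.I))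

lemma ee_add (x y : ℝ) : ee (x + y) = ee x * ee y := by
  simp [ee, add_mul, Complex.exp_add]

lemma ee_zero : ee 0 = 1 := by simp [ee]

lemma ee_pow (x : ℝ) (n : ℕ) : (ee x) ^ n = ee (n * x) := by
  rw [ee, ee, ← Complex.exp_nat_mul]; push_cast; ring_nf

lemma abs_ee (x : ℝ) : Complex.abs (ee x) = 1 := by
  rw [ee, Complex.abs_apply, Complex.norm_exp]
  simp [Complex.mul_re]

lemma ee_sum {ι : Type*} (s : Finset ι) (f : ι → ℝ) : ee (∑ i ∈ s, f i) = ∏ i ∈ s, ee (f i) := by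
  classical
  induction s using Finset.induction with
  | empty => simp [ee_zero]
  | insert _ _ h ih => rw [Finset.sum_insert h, Finset.prod_insert h, ee_add, ih]

lemma ee_eq_one_iff {x : ℝ} : ee x = 1 ↔ ∃ z : ℤ, x = z := by
  rw [ee, Complex.exp_eq_one_iff]
  constructor
  · rintro ⟨n, hn⟩
    have h2 : (2 * (Real.pi:ℂ) * Complex.I) ≠ 0 := by
      simp [Real.pi_ne_zero, Complex.I_ne_zero]
    have := mul_right_cancel₀ h2 hn
    exact ⟨n, by exact_mod_cast this⟩
  · rintro ⟨z, rfl⟩; exact ⟨z, rfl⟩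

lemma abs_one_add_ee_sq (x : ℝ) :
    (Complex.abs (1 + ee x)) ^ 2 = 2 + 2 * Real.cos (2 * Real.pi * x) := by
  have h1 : ee x = Complex.exp (((2 * Real.pi * x : ℝ) : ℂ) * Complex.I) := by
    rw [ee]; push_cast; ring_nf
  rw [h1, Complex.exp_mul_I, ← Complex.ofReal_cos, ← Complex.ofReal_sin]
  have : (1 : ℂ) + (Real.cos (2*Real.pi*x) + Real.sin (2*Real.pi*x) * Complex.I)
      = ((1 + Real.cos (2*Real.pi*x) : ℝ) : ℂ) + (Real.sin (2*Real.pi*x) : ℝ) * Complex.I := by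
    push_cast; ring
  rw [this, Complex.abs_apply, Complex.sq_norm, Complex.normSq_add_mul_I]
  have := Real.sin_sq_add_cos_sq (2*Real.pi*x)
  nlinarith [this]


lemma geom_bound (ζ : ℂ) (h1 : Complex.abs ζ = 1) (hne : ζ ≠ 1) (M : ℕ) :
    Complex.abs (∑ n ∈ range M, ζ ^ (n+1)) ≤ 2 / Complex.abs (ζ - 1) := by
  have hsum : ∑ n ∈ range M, ζ ^ (n+1) = ζ * ((ζ ^ M - 1)/(ζ - 1)) := by
    rw [← geom_sum_eq hne, Finset.mul_sum]
    exact Finset.sum_congr rfl fun n _ => pow_succ' ζ n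
  rw [hsum, map_mul, map_div₀, h1, one_mul]
  have hpos : 0 < Complex.abs (ζ - 1) := AbsoluteValue.pos _ (sub_ne_zero.2 hne)
  gcongr
  · calc Complex.abs (ζ ^ M - 1) ≤ Complex.abs (ζ ^ M) + Complex.abs 1 := by have := Complex.abs.add_le (ζ ^ M) (-1); rwa [← sub_eq_add_neg, AbsoluteValue.map_neg] at this
      _ ≤ 2 := by rw [map_pow, h1]; norm_num



theorem kronecker_aux {d : ℕ} (α : Fin d → ℝ)
    (hα : ∀ (k : Fin d → ℤ) (z : ℤ), (∑ i, (k i : ℝ) * α i) = (z : ℝ) → ∀ i, k i = 0)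
    (c : Fin d → ℝ) {ε : ℝ} (hε : 0 < ε) (hε2 : ε ≤ 1/2) :
    ∃ n : ℕ, 1 ≤ n ∧ ∀ i, ∃ z : ℤ, |n * α i - c i - z| < ε := by
  by_contra hcon
  push_neg at hcon
  -- rule out d = 0
  rcases Nat.eq_zero_or_pos d with hd0 | hd
  · obtain ⟨i, -⟩ := hcon 1 le_rfl
    exact absurd i.2 (by omega)
  set π := Real.pi
  have hπ : 0 < π := Real.pi_pos
  set ρ : ℝ := 2 + 2 * Real.cos (2 * π * ε) with hρdef
  have hρ4 : ρ < 4 := by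
    have h1 : Real.cos (2 * π * ε) < 1 := by
      refine lt_of_le_of_ne (Real.cos_le_one _) fun h => ?_
      have := (Real.cos_eq_one_iff_of_lt_of_lt (x := 2 * π * ε) (by nlinarith) (by nlinarith)).1 h
      nlinarith
    linarith
  have hρ0 : 0 ≤ ρ := by
    have := Real.neg_one_le_cos (2 * π * ε)
    linarith
  -- pointwise bound
  have hb : ∀ θ : ℝ, (∀ z : ℤ, ε ≤ |θ - z|) → (Complex.abs (1 + ee θ))^2 ≤ ρ := by
    intro θ hθ
    rw [abs_one_add_ee_sq]
    have hy1 : ε ≤ |θ - round θ| := hθ (round θ)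
    have hy2 : |θ - round θ| ≤ 1/2 := abs_sub_round θ
    have hcos : Real.cos (2 * π * θ) = Real.cos (2 * π * |θ - round θ|) := by
      rw [show 2 * π * |θ - (round θ : ℝ)| = |2 * π * (θ - round θ)| by
        rw [abs_mul, abs_of_pos (by positivity : (0:ℝ) < 2 * π)], Real.cos_abs]
      have h' : 2 * π * θ = 2 * π * (θ - round θ) + (round θ) * (2 * π) := by ring
      rw [h', Real.cos_add_int_mul_two_pi]
    have hle : Real.cos (2 * π * |θ - round θ|) ≤ Real.cos (2 * π * ε) := by
      apply Real.cos_le_cos_of_nonneg_of_le_pi (by positivity)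
      · nlinarith
      · nlinarith [abs_nonneg (θ - round θ)]
    rw [hcos]; linarith
  -- the product function
  set ψ : ℕ → ℂ := fun n => ∏ i, (1 + ee (n * α i - c i)) with hψdef
  set ρ' : ℝ := ρ * 4 ^ (d - 1) with hρ'def
  have hρ'0 : 0 ≤ ρ' := by positivity
  have hψb : ∀ n : ℕ, 1 ≤ n → (Complex.abs (ψ n))^2 ≤ ρ' := by
    intro n hn
    obtain ⟨i₀, hi₀⟩ := hcon n hn
    have habs : (Complex.abs (ψ n))^2 = ∏ i, (Complex.abs (1 + ee (n * α i - c i)))^2 := by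
      rw [hψdef, map_prod, ← Finset.prod_pow]
    rw [habs, ← Finset.mul_prod_erase Finset.univ _ (Finset.mem_univ i₀)]
    have h4 : ∀ i ∈ Finset.univ.erase i₀, (Complex.abs (1 + ee (n * α i - c i)))^2 ≤ 4 := by
      intro i _
      have : Complex.abs (1 + ee (n * α i - c i)) ≤ 2 := by
        calc Complex.abs (1 + ee (n * α i - c i)) ≤
            Complex.abs 1 + Complex.abs (ee (n * α i - c i)) := Complex.abs.add_le _ _
          _ = 2 := by rw [abs_ee]; norm_num
      nlinarith [AbsoluteValue.nonneg Complex.abs (1 + ee (n * α i - c i))]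
    calc (Complex.abs (1 + ee (n * α i₀ - c i₀)))^2 *
          ∏ i ∈ Finset.univ.erase i₀, (Complex.abs (1 + ee (n * α i - c i)))^2
        ≤ ρ * 4 ^ (Finset.univ.erase i₀).card := by
          have := Finset.prod_le_prod (s := Finset.univ.erase i₀)
            (f := fun i => (Complex.abs (1 + ee (n * α i - c i)))^2) (g := fun _ => 4)
            (fun i _ => sq_nonneg _) h4
          rw [Finset.prod_const] at this
          exact mul_le_mul (hb _ hi₀) this
            (Finset.prod_nonneg fun i _ => sq_nonneg _) hρ0
      _ = ρ' := by rw [Finset.card_erase_of_mem (Finset.mem_univ i₀), Finset.card_univ,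
          Fintype.card_fin]
  -- frequencies nonzero
  have hfreq : ∀ j : ℕ, ∀ m : Fin d → ℕ, m ≠ (fun _ => j) →
      ee (∑ i, ((m i : ℝ) - j) * α i) ≠ 1 := by
    intro j m hne h1
    obtain ⟨z, hz⟩ := ee_eq_one_iff.mp h1
    have hz' : (∑ i, ((((m i : ℤ) - j) : ℤ) : ℝ) * α i) = (z : ℝ) := by push_cast; exact hz
    have h0 := hα (fun i => (m i : ℤ) - j) z hz'
    apply hne; funext i
    have h0i : (m i : ℤ) - j = 0 := h0 i
    omega
  -- key inequality for each j
  have hkey : ∀ j : ℕ, (((2*j).choose j : ℝ))^d ≤ ρ'^j := by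
    intro j
    classical
    set B := Fintype.piFinset (fun _ : Fin d => Finset.range (2*j+1)) with hB
    set m₀ : Fin d → ℕ := fun _ => j with hm₀
    have hm₀B : m₀ ∈ B := by
      simp only [hB, Fintype.mem_piFinset, Finset.mem_range, hm₀]
      omega
    set b : (Fin d → ℕ) → ℂ :=
      fun m => (∏ i, ((2*j).choose (m i) : ℂ)) * ee (-(∑ i, (m i : ℝ) * c i)) with hbdef
    set ζ : (Fin d → ℕ) → ℂ := fun m => ee (∑ i, ((m i : ℝ) - j) * α i) with hζdef
    have per_i : ∀ (i : Fin d) (n : ℕ),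
        (1 + ee (n * α i - c i))^(2*j) * (ee (-(j * α i)))^n
        = ∑ m ∈ range (2*j+1),
            ((2*j).choose m : ℂ) * ee (-((m:ℝ) * c i)) * (ee (((m:ℝ) - j) * α i))^n := by
      intro i n
      rw [add_comm (1:ℂ), add_pow, Finset.sum_mul]
      refine Finset.sum_congr rfl fun m hm => ?_
      rw [one_pow, mul_one, ee_pow _ m, ee_pow _ n, ee_pow _ n]
      have key : ee ((m:ℝ) * ((n:ℝ) * α i - c i)) * ee ((n:ℝ) * -((j:ℝ) * α i))
          = ee (-((m:ℝ) * c i)) * ee ((n:ℝ) * (((m:ℝ) - (j:ℝ)) * α i)) := by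
        rw [← ee_add, ← ee_add]; congr 1; ring
      linear_combination (((2*j).choose m : ℂ)) * key
    have hexp : ∀ n : ℕ,
        (ψ n)^(2*j) * (ee (-((j:ℝ) * ∑ i, α i)))^n = ∑ m ∈ B, b m * (ζ m)^n := by
      intro n
      have h1 : (ψ n)^(2*j) = ∏ i, (1 + ee (n * α i - c i))^(2*j) := by
        rw [hψdef, ← Finset.prod_pow]
      have h2 : (ee (-((j:ℝ) * ∑ i, α i)))^n = ∏ i, (ee (-((j:ℝ) * α i)))^n := by
        rw [Finset.prod_pow, ← ee_sum]
        congr 2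
        rw [Finset.mul_sum, Finset.sum_neg_distrib]
      rw [h1, h2, ← Finset.prod_mul_distrib,
        Finset.prod_congr rfl (fun i _ => per_i i n), Finset.prod_univ_sum]
      refine Finset.sum_congr rfl fun m hm => ?_
      rw [Finset.prod_mul_distrib, Finset.prod_mul_distrib, Finset.prod_pow, ← ee_sum, ← ee_sum,
        hbdef, hζdef]
      have harg : (∑ i, -((m i:ℝ) * c i)) = -(∑ i, (m i:ℝ) * c i) := by
        rw [← Finset.sum_neg_distrib]
      rw [harg]
    set w : ℂ := ee (-((j:ℝ) * ∑ i, α i)) with hw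
    set S : ℕ → ℂ := fun M => ∑ n ∈ range M, (ψ (n+1))^(2*j) * w^(n+1) with hSdef
    have hS : ∀ M : ℕ, S M = b m₀ * M + ∑ m ∈ B.erase m₀, b m * ∑ n ∈ range M, (ζ m)^(n+1) := by
      intro M
      have e1 : S M = ∑ m ∈ B, b m * ∑ n ∈ range M, (ζ m)^(n+1) := by
        rw [hSdef]
        simp only [hexp]
        rw [Finset.sum_comm]
        exact Finset.sum_congr rfl fun m _ => (Finset.mul_sum _ _ _).symm
      rw [e1, ← Finset.add_sum_erase B _ hm₀B]
      congr 1
      have hζ1 : ζ m₀ = 1 := by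
        rw [hζdef]; simp only [hm₀, sub_self, zero_mul, Finset.sum_const_zero, ee_zero]
      rw [hζ1]
      simp
    set K : ℝ := ∑ m ∈ B.erase m₀, Complex.abs (b m) * (2 / Complex.abs (ζ m - 1)) with hK
    have hSK : ∀ M : ℕ, Complex.abs (S M - b m₀ * M) ≤ K := by
      intro M
      rw [hS, add_sub_cancel_left, hK]
      refine le_trans (Complex.abs.sum_le _ _) (Finset.sum_le_sum fun m hm => ?_)
      rw [map_mul]
      refine mul_le_mul_of_nonneg_left ?_ (AbsoluteValue.nonneg _ _)
      have hmne : m ≠ m₀ := (Finset.mem_erase.mp hm).1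
      exact geom_bound (ζ m) (abs_ee _) (hfreq j m hmne) M
    have hSb : ∀ M : ℕ, Complex.abs (S M) ≤ M * ρ'^j := by
      intro M
      refine le_trans (Complex.abs.sum_le _ _) ?_
      calc ∑ n ∈ range M, Complex.abs ((ψ (n+1))^(2*j) * w^(n+1))
          ≤ ∑ _n ∈ range M, ρ'^j := by
            refine Finset.sum_le_sum fun n _ => ?_
            rw [map_mul, map_pow, map_pow, hw, abs_ee, one_pow, mul_one, pow_mul]
            exact pow_le_pow_left₀ (sq_nonneg _) (hψb (n+1) (by omega)) j
        _ = M * ρ'^j := by rw [Finset.sum_const, Finset.card_range, nsmul_eq_mul]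
    have hbm₀ : Complex.abs (b m₀) = ((2*j).choose j : ℝ)^d := by
      rw [hbdef]
      simp only [map_mul, abs_ee, mul_one, map_prod, hm₀]
      simp [Complex.abs_apply, Complex.norm_natCast]
    by_contra hlt
    push_neg at hlt
    have hδpos : (0:ℝ) < ((2*j).choose j : ℝ)^d - ρ'^j := by linarith
    obtain ⟨M, hM⟩ := exists_nat_gt (K / (((2*j).choose j : ℝ)^d - ρ'^j))
    have h1 : (M:ℝ) * ((2*j).choose j:ℝ)^d ≤ M * ρ'^j + K := by
      have e1 : Complex.abs (b m₀ * M) = M * ((2*j).choose j:ℝ)^d := by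
        rw [map_mul, hbm₀, Complex.abs_apply, Complex.norm_natCast, mul_comm]
      calc (M:ℝ) * ((2*j).choose j:ℝ)^d = Complex.abs (b m₀ * M) := e1.symm
        _ ≤ Complex.abs (S M) + Complex.abs (S M - b m₀ * M) := by
            have h := Complex.abs.sub_le (b m₀ * M) (S M) 0
            rw [sub_zero, sub_zero, Complex.abs.map_sub (b m₀ * (M:ℂ)) (S M)] at h
            linarith
        _ ≤ M * ρ'^j + K := add_le_add (hSb M) (hSK M)
    have h2 : K < M * (((2*j).choose j : ℝ)^d - ρ'^j) := (div_lt_iff₀ hδpos).1 hM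
    nlinarith
  -- final contradiction
  have hρ'lt : ρ' < 4^d := by
    rw [hρ'def]
    calc ρ * 4^(d-1) < 4 * 4^(d-1) := mul_lt_mul_of_pos_right hρ4 (by positivity)
      _ = 4^d := by rw [← pow_succ']; congr 1; omega
  set s : ℝ := ρ' / 4^d with hs
  have hs0 : 0 ≤ s := by positivity
  have hs1 : s < 1 := (div_lt_one (by positivity)).2 hρ'lt
  have hup : ∀ j : ℕ, 4 ≤ j → 1 ≤ (j:ℝ)^d * s^j := by
    intro j hj
    have h4 := (Nat.four_pow_lt_mul_centralBinom j hj).le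
    have hc : j.centralBinom = (2*j).choose j := rfl
    rw [hc] at h4
    have h4' : ((4:ℝ))^j ≤ (j:ℝ) * ((2*j).choose j : ℝ) := by exact_mod_cast h4
    have h8 : ((4:ℝ)^j)^d ≤ (j:ℝ)^d * ρ'^j := by
      refine le_trans (pow_le_pow_left₀ (by positivity) h4' d) ?_
      rw [mul_pow]
      exact mul_le_mul_of_nonneg_left (hkey j) (by positivity)
    rw [hs, div_pow, ← mul_div_assoc, le_div_iff₀ (by positivity), one_mul]
    calc ((4:ℝ)^d)^j = ((4:ℝ)^j)^d := by rw [← pow_mul, ← pow_mul, mul_comm]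
      _ ≤ _ := h8
  have habs : |s| < 1 := by rwa [_root_.abs_of_nonneg hs0]
  have htend := tendsto_pow_const_mul_const_pow_of_abs_lt_one d habs
  have hev : ∀ᶠ j : ℕ in atTop, (j:ℝ)^d * s^j < 1 :=
    htend.eventually_lt_const (by norm_num)
  obtain ⟨j, hj4, hjlt⟩ := ((eventually_ge_atTop 4).and hev).exists
  exact absurd (hup j hj4) (not_le.2 hjlt)


theorem kronecker {d : ℕ} (α : Fin d → ℝ)
    (hα : ∀ (k : Fin d → ℤ) (z : ℤ), (∑ i, (k i : ℝ) * α i) = (z : ℝ) → ∀ i, k i = 0)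
    (c : Fin d → ℝ) {ε : ℝ} (hε : 0 < ε) :
    ∃ n : ℕ, 1 ≤ n ∧ ∀ i, ∃ z : ℤ, |n * α i - c i - z| < ε := by
  obtain ⟨n, hn, h⟩ := kronecker_aux α hα c (lt_min hε (by norm_num : (0:ℝ) < 1/2))
    (min_le_right _ _)
  exact ⟨n, hn, fun i => (h i).imp fun z hz => hz.trans_le (min_le_left _ _)⟩

lemma indep_coeffs {d : ℕ} {α : Fin d → ℝ}
    (hind : LinearIndependent ℚ (Fin.cons 1 α : Fin (d + 1) → ℝ)) :
    ∀ (k : Fin d → ℤ) (z : ℤ), (∑ i, (k i : ℝ) * α i) = (z : ℝ) → ∀ i, k i = 0 := by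
  intro k z hsum i
  have h := Fintype.linearIndependent_iff.mp hind (Fin.cons (-(z:ℚ)) (fun i => (k i : ℚ)))
  have hzero : ∑ t : Fin (d+1),
      (Fin.cons (-(z:ℚ)) (fun i => (k i : ℚ)) : Fin (d+1) → ℚ) t • (Fin.cons (1:ℝ) α : Fin (d+1) → ℝ) t = 0 := by
    rw [Fin.sum_univ_succ]
    simp only [Fin.cons_zero, Fin.cons_succ, Rat.smul_def]
    push_cast
    rw [hsum]  -- ?
    ring
  have := h hzero i.succ
  simp only [Fin.cons_succ, Rat.cast_eq_zero] at this
  exact_mod_cast this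


lemma floor_fract_add (y z : ℝ) : ⌊y + Int.fract z⌋ = ⌊y + z⌋ - ⌊z⌋ := by
  have : y + z = (y + Int.fract z) + (⌊z⌋ : ℝ) := by
    rw [Int.fract]; ring
  rw [this, Int.floor_add_intCast]; ring

lemma sig01 (y : ℝ) {s : ℝ} (h0 : 0 ≤ s) (h1 : s < 1) :
    ⌊y + s⌋ - ⌊y⌋ = if 1 - Int.fract y ≤ s then 1 else 0 := by
  have key : ⌊y + s⌋ - ⌊y⌋ = ⌊Int.fract y + s⌋ := by
    rw [add_comm (Int.fract y) s, floor_fract_add s y, add_comm s y]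
  rw [key]
  have hf0 := Int.fract_nonneg y
  have hf1 := Int.fract_lt_one y
  split_ifs with h
  · rw [Int.floor_eq_iff]
    push_cast
    constructor <;> linarith
  · push_neg at h
    rw [Int.floor_eq_zero_iff]
    constructor <;> [positivity; linarith]

lemma select {N : ℕ} (β : Fin N → ℝ) (hβ : Function.Injective β)
    (hmem : ∀ q, β q ∈ Set.Ioo (0:ℝ) 1) (t : ℕ) (ht : t ≤ N) :
    ∃ u v : ℝ, 0 ≤ u ∧ u < v ∧ v ≤ 1 ∧
      ∀ s ∈ Set.Ioo u v, (∑ q : Fin N, if β q ≤ s then (1:ℤ) else 0) = t := by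
  classical
  set τ := Tuple.sort β with hτ
  set δ : Fin N → ℝ := β ∘ τ with hδ
  have hmono : Monotone δ := Tuple.monotone_sort β
  have hinj : Function.Injective δ := hβ.comp τ.injective
  have hsm : StrictMono δ := hmono.strictMono_of_injective hinj
  have hδmem : ∀ q, δ q ∈ Set.Ioo (0:ℝ) 1 := fun q => hmem _
  refine ⟨if h0 : t = 0 then 0 else δ ⟨t - 1, by omega⟩,
          if hN : t = N then 1 else δ ⟨t, by omega⟩, ?_, ?_, ?_, ?_⟩
  · split_ifs with h0
    · exact le_refl 0
    · exact (hδmem _).1.le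
  · split_ifs with h0 hN hN
    · norm_num
    · exact (hδmem _).1
    · exact (hδmem _).2
    · exact hsm (by simp only [Fin.lt_def]; omega)
  · split_ifs with hN
    · exact le_refl 1
    · exact (hδmem _).2.le
  · intro s hs
    obtain ⟨hsu, hsv⟩ := hs
    have hcount : ∀ q : Fin N, (δ q ≤ s ↔ (q : ℕ) < t) := by
      intro q
      constructor
      · intro hle
        by_contra hq
        push_neg at hq
        have htN : t ≠ N := by omega
        rw [dif_neg htN] at hsv
        have : δ ⟨t, by omega⟩ ≤ δ q := hmono (by simp only [Fin.le_def]; omega)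
        linarith
      · intro hq
        have ht0 : t ≠ 0 := by omega
        rw [dif_neg ht0] at hsu
        have : δ q ≤ δ ⟨t - 1, by omega⟩ := hmono (by simp only [Fin.le_def]; omega)
        linarith
    have e1 : (∑ q : Fin N, if β q ≤ s then (1:ℤ) else 0)
        = ∑ q : Fin N, if δ q ≤ s then (1:ℤ) else 0 :=
      (Equiv.sum_comp τ (fun q => if β q ≤ s then (1:ℤ) else 0)).symm
    rw [e1]
    have e2 : ∀ q : Fin N, (if δ q ≤ s then (1:ℤ) else 0) = if (q:ℕ) < t then 1 else 0 := by
      intro q; simp [hcount q]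
    rw [Finset.sum_congr rfl fun q _ => e2 q]
    rw [← Finset.sum_range (fun k => if k < t then (1:ℤ) else 0)]
    rw [Finset.sum_boole]
    have : (Finset.range N).filter (fun k => k < t) = Finset.range t := by
      ext k; simp [Finset.mem_filter, Finset.mem_range]; omega
    rw [this, Finset.card_range]


section Helpers

noncomputable def Gfun (β : ℝ) (s : ℝ) (m : ℕ) : ℤ := ⌊(m:ℝ) * β + s⌋

lemma Gfun_zero (β : ℝ) {s : ℝ} (hs : s ∈ Set.Ico (0:ℝ) 1) : Gfun β s 0 = 0 := by
  rw [Gfun]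
  push_cast
  rw [zero_mul, zero_add]
  exact Int.floor_eq_zero_iff.mpr hs

lemma Gfun_succ (β : ℝ) {s : ℝ} (hs : s ∈ Set.Ico (0:ℝ) 1) (m : ℕ) :
    Gfun β s (m+1) = ⌊((m:ℝ)+1) * β⌋ +
      (if 1 - Int.fract (((m:ℝ)+1) * β) ≤ s then 1 else 0) := by
  have := sig01 (((m:ℝ)+1) * β) hs.1 hs.2
  rw [Gfun, show ((m+1:ℕ):ℝ) = (m:ℝ)+1 by push_cast; ring]
  omega

noncomputable def FwFun {d N : ℕ} (α : Fin d → ℝ) (v : Fin d → ℝ) : Fin N → Fin d → ℤ :=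
  fun k i => Gfun (α i) (v i) ((k:ℕ)+1) - Gfun (α i) (v i) (k:ℕ)

noncomputable def TmFun {d N : ℕ} (α : Fin d → ℝ) (w : Fin N → Fin d → ℤ) (i : Fin d) : ℤ :=
  ∑ k ∈ Finset.range N,
    ((∑ k' ∈ Finset.range (k+1), (if h : k' < N then w ⟨k', h⟩ i else 0)) - ⌊((k:ℝ)+1) * α i⌋)

lemma TmFun_Fw {d N : ℕ} (α : Fin d → ℝ) (v : Fin d → ℝ) (hv : ∀ i, v i ∈ Set.Ico (0:ℝ) 1)
    (i : Fin d) :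
    TmFun α (FwFun (N := N) α v) i
      = ∑ q : Fin N, (if 1 - Int.fract ((((q:ℕ):ℝ)+1) * α i) ≤ v i then (1:ℤ) else 0) := by
  rw [TmFun, ← Finset.sum_range
    (fun k => if 1 - Int.fract (((k:ℝ)+1) * α i) ≤ v i then (1:ℤ) else 0)]
  refine Finset.sum_congr rfl fun k hk => ?_
  have hkN : k < N := mem_range.mp hk
  have hin : ∑ k' ∈ range (k+1), (if h : k' < N then FwFun (N := N) α v ⟨k', h⟩ i else 0)
      = Gfun (α i) (v i) (k+1) := by
    have hterm : ∀ k' ∈ range (k+1),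
        (if h : k' < N then FwFun (N := N) α v ⟨k', h⟩ i else 0)
          = Gfun (α i) (v i) (k'+1) - Gfun (α i) (v i) k' := by
      intro k' hk'
      have hk'N : k' < N := by have := mem_range.mp hk'; omega
      rw [dif_pos hk'N, FwFun]
    rw [Finset.sum_congr rfl hterm, Finset.sum_range_sub (fun m => Gfun (α i) (v i) m),
      Gfun_zero (α i) (hv i), sub_zero]
  rw [hin, Gfun_succ (α i) (hv i) k]
  ring

lemma TmFun_Fw_nonneg {d N : ℕ} (α : Fin d → ℝ) (v : Fin d → ℝ)
    (hv : ∀ i, v i ∈ Set.Ico (0:ℝ) 1) (i : Fin d) :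
    0 ≤ TmFun α (FwFun (N := N) α v) i ∧ TmFun α (FwFun (N := N) α v) i ≤ N := by
  rw [TmFun_Fw α v hv i]
  constructor
  · exact Finset.sum_nonneg fun q _ => by positivity
  · calc (∑ q : Fin N, if 1 - Int.fract ((((q:ℕ):ℝ)+1) * α i) ≤ v i then (1:ℤ) else 0)
        ≤ ∑ _q : Fin N, (1:ℤ) := Finset.sum_le_sum fun q _ => by split_ifs <;> norm_num
      _ = N := by simp

lemma Fw_inj {d N : ℕ} (α : Fin d → ℝ) (v v' : Fin d → ℝ)
    (hv : ∀ i, v i ∈ Set.Ico (0:ℝ) 1) (hv' : ∀ i, v' i ∈ Set.Ico (0:ℝ) 1)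
    (heq : ∀ i, TmFun α (FwFun (N := N) α v) i = TmFun α (FwFun (N := N) α v') i) :
    FwFun (N := N) α v = FwFun (N := N) α v' := by
  funext k i
  -- symmetric helper
  have key : ∀ s s' : ℝ, s ∈ Set.Ico (0:ℝ) 1 → s' ∈ Set.Ico (0:ℝ) 1 → s ≤ s' →
      (∑ q : Fin N, (if 1 - Int.fract ((((q:ℕ):ℝ)+1) * α i) ≤ s then (1:ℤ) else 0))
        = (∑ q : Fin N, (if 1 - Int.fract ((((q:ℕ):ℝ)+1) * α i) ≤ s' then (1:ℤ) else 0)) →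
      ∀ m : ℕ, m ≤ N → Gfun (α i) s m = Gfun (α i) s' m := by
    intro s s' hs hs' hss hsum m hm
    have hmono : ∀ q : Fin N,
        (if 1 - Int.fract ((((q:ℕ):ℝ)+1) * α i) ≤ s then (1:ℤ) else 0)
          ≤ (if 1 - Int.fract ((((q:ℕ):ℝ)+1) * α i) ≤ s' then (1:ℤ) else 0) := by
      intro q
      split_ifs with h1 h2
      · exact le_refl 1
      · exact absurd (h1.trans hss) h2
      · norm_num
      · exact le_refl 0
    have hall := (Finset.sum_eq_sum_iff_of_le (fun q _ => hmono q)).mp hsum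
    match m with
    | 0 => rw [Gfun_zero _ hs, Gfun_zero _ hs']
    | m'+1 =>
      have hm' : m' < N := by omega
      have := hall ⟨m', hm'⟩ (Finset.mem_univ _)
      rw [Gfun_succ _ hs, Gfun_succ _ hs']
      simp only [Fin.val_mk] at this
      omega
  have heqi := heq i
  rw [TmFun_Fw α v hv i, TmFun_Fw α v' hv' i] at heqi
  rcases le_total (v i) (v' i) with hle | hle
  · have hG := key (v i) (v' i) (hv i) (hv' i) hle heqi
    rw [FwFun, FwFun, hG ((k:ℕ)+1) (by omega), hG (k:ℕ) (by omega)]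
  · have hG := key (v' i) (v i) (hv' i) (hv i) hle heqi.symm
    rw [FwFun, FwFun, hG ((k:ℕ)+1) (by omega), hG (k:ℕ) (by omega)]

end Helpers


theorem complexity_product_sturmian (d : ℕ) (hd : 1 ≤ d) (α : Fin d → ℝ)
    (hind : LinearIndependent ℚ (Fin.cons 1 α : Fin (d + 1) → ℝ))
    (a : ℕ → Fin d → ℤ)
    (ha : ∀ n i, a n i = ⌊(n : ℝ) * α i⌋ - ⌊((n : ℝ) - 1) * α i⌋)
    (N : ℕ) (hN : 1 ≤ N) :
    {w : Fin N → Fin d → ℤ | ∃ n : ℕ, ∀ k : Fin N, w k = a (n + k)}.ncard =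
      (N + 1) ^ d := by
  classical
  have hco := indep_coeffs hind
  -- no integer relations for a single coordinate
  have hnotint : ∀ (i : Fin d) (q : ℤ), q ≠ 0 → ∀ z : ℤ, (q:ℝ) * α i ≠ (z:ℝ) := by
    intro i q hq z heq
    have hs : (∑ j, ((if j = i then q else 0 : ℤ) : ℝ) * α j) = (q:ℝ) * α i := by
      rw [Finset.sum_eq_single i (fun j _ hji => by simp [if_neg hji])
        (fun h => absurd (Finset.mem_univ i) h)]
      simp
    have h0 := hco (fun j => if j = i then q else 0) z (by rw [hs]; exact heq) i
    simp at h0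
    exact hq h0
  -- fractional parts lie in (0,1)
  have hfr : ∀ (i : Fin d) (q : ℕ), Int.fract (((q:ℝ)+1) * α i) ∈ Set.Ioo (0:ℝ) 1 := by
    intro i q
    refine ⟨lt_of_le_of_ne (Int.fract_nonneg _) fun h => ?_, Int.fract_lt_one _⟩
    have h' : ((q:ℝ)+1) * α i = (⌊((q:ℝ)+1) * α i⌋ : ℝ) := by
      have := Int.fract ((((q:ℝ))+1) * α i)
      rw [Int.fract] at h
      linarith [h.symm]
    exact hnotint i ((q:ℤ)+1) (by omega) ⌊((q:ℝ)+1) * α i⌋ (by push_cast; push_cast at h'; linarith [h'])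
  -- thresholds are injective
  have hβinj : ∀ i : Fin d, Function.Injective
      (fun q : Fin N => 1 - Int.fract ((((q:ℕ):ℝ)+1) * α i)) := by
    intro i q q' h
    simp only [sub_right_inj] at h
    obtain ⟨z, hz⟩ := Int.fract_eq_fract.mp h
    by_contra hne
    have h0 : (((q:ℕ):ℤ) - ((q':ℕ):ℤ)) ≠ 0 := by
      intro h
      exact hne (Fin.ext (by omega))
    apply hnotint i _ h0 z
    push_cast
    push_cast at hz
    linarith
  -- positions
  set xx : ℕ → Fin d → ℝ := fun n i => Int.fract (((n:ℝ) - 1) * α i) with hxx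
  have hxx01 : ∀ n i, xx n i ∈ Set.Ico (0:ℝ) 1 :=
    fun n i => ⟨Int.fract_nonneg _, Int.fract_lt_one _⟩
  -- factors are determined by fractional parts
  have hword : ∀ n : ℕ, ∀ k : Fin N, a (n + (k:ℕ)) = FwFun (N := N) α (xx n) k := by
    intro n k
    funext i
    rw [ha, FwFun, Gfun, Gfun, hxx]
    simp only []
    rw [floor_fract_add, floor_fract_add]
    have e1 : (((k:ℕ)+1:ℕ):ℝ) * α i + ((n:ℝ)-1) * α i = ((n + (k:ℕ) : ℕ):ℝ) * α i := by
      push_cast; ring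
    have e2 : (((k:ℕ):ℕ):ℝ) * α i + ((n:ℝ)-1) * α i = (((n + (k:ℕ) : ℕ):ℝ) - 1) * α i := by
      push_cast; ring
    rw [e1, e2]
    ring
  -- surjectivity
  have hsurj : ∀ t : Fin d → ℤ, (∀ i, 0 ≤ t i ∧ t i ≤ N) →
      ∃ n : ℕ, ∀ i, TmFun α (FwFun (N := N) α (xx n)) i = t i := by
    intro t ht
    have hsel := fun i : Fin d => select
      (fun q : Fin N => 1 - Int.fract ((((q:ℕ):ℝ)+1) * α i)) (hβinj i)
      (fun q => by
        have h := hfr i (q:ℕ)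
        simp only [Set.mem_Ioo] at h ⊢
        constructor <;> linarith [h.1, h.2])
      ((t i).toNat) (by have := ht i; omega)
    choose u v hu0 huv hv1 hcount using hsel
    have hne : (Finset.univ : Finset (Fin d)).Nonempty := by
      have : Nonempty (Fin d) := ⟨⟨0, by omega⟩⟩
      exact Finset.univ_nonempty
    set ε : ℝ := Finset.univ.inf' hne (fun i => (v i - u i)/2) with hε
    have hεpos : 0 < ε := by
      rw [hε, Finset.lt_inf'_iff]
      intro i _
      linarith [huv i]
    obtain ⟨n, hn1, hnz⟩ := kronecker α hco (fun i => (u i + v i)/2) hεpos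
    refine ⟨n + 1, fun i => ?_⟩
    obtain ⟨z, hz⟩ := hnz i
    have hεle : ε ≤ (v i - u i)/2 := Finset.inf'_le _ (Finset.mem_univ i)
    rw [abs_lt] at hz
    have hmem : Int.fract ((n:ℝ) * α i) ∈ Set.Ioo (u i) (v i) := by
      have hfl : ⌊(n:ℝ) * α i⌋ = z := by
        rw [Int.floor_eq_iff]
        constructor
        · have := hu0 i; nlinarith [hz.1]
        · have := hv1 i; nlinarith [hz.2]
      rw [Int.fract, hfl]
      constructor
      · nlinarith [hz.1]
      · nlinarith [hz.2]
    have hxeq : xx (n+1) i = Int.fract ((n:ℝ) * α i) := by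
      rw [hxx]
      simp only []
      congr 1
      push_cast
      ring
    rw [TmFun_Fw α (xx (n+1)) (hxx01 (n+1)) i]
    have := hcount i (xx (n+1) i) (by rw [hxeq]; exact hmem)
    rw [this, Int.toNat_of_nonneg (ht i).1]
  -- assemble
  set SS := {w : Fin N → Fin d → ℤ | ∃ n : ℕ, ∀ k : Fin N, w k = a (n + k)} with hSS
  have hSw : ∀ w ∈ SS, ∃ n : ℕ, w = FwFun (N := N) α (xx n) := by
    rintro w ⟨n, hn⟩
    exact ⟨n, funext fun k => (hn k).trans (hword n k)⟩
  have hinj : Set.InjOn (fun w => TmFun α w) SS := by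
    intro w hw w' hw' heq
    obtain ⟨n, rfl⟩ := hSw w hw
    obtain ⟨n', rfl⟩ := hSw w' hw'
    exact Fw_inj α (xx n) (xx n') (hxx01 n) (hxx01 n') (fun i => congrFun heq i)
  have himg : (fun w => TmFun α w) '' SS
      = ((Fintype.piFinset (fun _ : Fin d => Finset.Icc (0:ℤ) N) : Finset (Fin d → ℤ)) :
          Set (Fin d → ℤ)) := by
    ext t
    simp only [Set.mem_image, Finset.coe_sort_coe, Finset.mem_coe, Fintype.mem_piFinset,
      Finset.mem_Icc]
    constructor
    · rintro ⟨w, hw, rfl⟩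
      obtain ⟨n, rfl⟩ := hSw w hw
      exact fun i => TmFun_Fw_nonneg α (xx n) (hxx01 n) i
    · intro hti
      obtain ⟨n, hn⟩ := hsurj t (fun i => hti i)
      exact ⟨FwFun (N := N) α (xx n), ⟨n, fun k => (hword n k).symm⟩, funext hn⟩
  calc SS.ncard = ((fun w => TmFun α w) '' SS).ncard := (Set.ncard_image_of_injOn hinj).symm
    _ = (N + 1)^d := by
        rw [himg, Set.ncard_coe_finset, Fintype.card_piFinset]
        have : ∀ i : Fin d, (Finset.Icc (0:ℤ) (N:ℤ)).card = N + 1 := by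
          intro i; rw [Int.card_Icc]; omega
        rw [Finset.prod_congr rfl (fun i _ => this i), Finset.prod_const, Finset.card_univ,
          Fintype.card_fin]
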